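/- Let 0 ≤ δ ≤ 1/2 and let P₁ = P_δ and P₂ = P_{−δ}, where P_δ is the probability measure on ℝ with P_δ({1/2}) = (1+δ)/2 and P_δ({−1/2}) = (1−δ)/2. Let M be an ε-DP Markov kernel from [−1/2,1/2]^n to a measurable space Y, and for j = 1, 2 let Q_j(S) = ∫ M(x)(S) dP_j^{⊗n}(x). Then for every k ∈ {0, 1, …, n}: ‖Q₁ − Q₂‖_TV ≤ 2δ · Σ_{i=1}^k ε_i + δ · √(3(n−k)/2). -/

import Mathlib

open MeasureTheory ProbabilityTheory Real

noncomputable section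

abbrev UnitI : Set ℝ := Set.Icc (-(1:ℝ)/2) (1/2)

abbrev Dataset (n : ℕ) : Type := Fin n → UnitI

def INeighbor {n : ℕ} (i : Fin n) (x x' : Dataset n) : Prop :=
  ∀ j : Fin n, j ≠ i → x j = x' j

def IsDP {n : ℕ} {Y : Type} [MeasurableSpace Y]
    (ε : Fin n → ℝ) (M : Kernel (Dataset n) Y) : Prop :=
  ∀ i : Fin n, ∀ x x' : Dataset n, INeighbor i x x' →
    ∀ S : Set Y, MeasurableSet S →
      M x S ≤ ENNReal.ofReal (Real.exp (ε i)) * M x' S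

/-- Total variation distance: `sup_S |P(S) − Q(S)|` over measurable sets `S`. -/
def tvDist {Y : Type*} [MeasurableSpace Y] (P Q : Measure Y) : ℝ :=
  ⨆ S : {S : Set Y // MeasurableSet S}, |(P S.1).toReal - (Q S.1).toReal|

/-- The two-point distribution on `[−1/2,1/2]` putting mass `(1+δ)/2` at `1/2`
and mass `(1−δ)/2` at `−1/2`. -/
def twoPointI (δ : ℝ) : Measure UnitI :=
  ENNReal.ofReal ((1 + δ) / 2) • Measure.dirac ⟨1 / 2, by norm_num⟩
    + ENNReal.ofReal ((1 - δ) / 2) • Measure.dirac ⟨-(1 / 2), by norm_num⟩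

namespace TPB

def ptb (b : Bool) : UnitI := if b then ⟨1 / 2, by norm_num⟩ else ⟨-(1 / 2), by norm_num⟩

def pt {n : ℕ} (s : Fin n → Bool) : Dataset n := fun i => ptb (s i)

def q (δ : ℝ) (b : Bool) : ℝ := if b then (1 + δ) / 2 else (1 - δ) / 2

lemma q_nonneg {δ : ℝ} (hδ : |δ| ≤ 1) (b : Bool) : 0 ≤ q δ b := by
  rw [abs_le] at hδ; cases b <;> simp [q] <;> linarith [hδ.1, hδ.2]

lemma q_sum (δ : ℝ) : q δ true + q δ false = 1 := by simp [q]; ring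

instance (δ : ℝ) : IsFiniteMeasure (twoPointI δ) := by
  constructor
  simp [twoPointI]

lemma twoPoint_eq_sum (δ : ℝ) :
    twoPointI δ = ∑ b : Bool, ENNReal.ofReal (q δ b) • Measure.dirac (ptb b) := by
  simp [twoPointI, q, ptb, Fintype.sum_bool]

lemma pi_twoPoint_eq (n : ℕ) (δ : ℝ) (hδ : |δ| ≤ 1) :
    (Measure.pi fun _ : Fin n => twoPointI δ)
      = ∑ s : Fin n → Bool, ENNReal.ofReal (∏ i, q δ (s i)) • Measure.dirac (pt s) := by
  classical
  refine (Measure.pi_eq (μ := fun _ : Fin n => twoPointI δ) fun t ht => ?_)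
  have hdir : ∀ (s : Fin n → Bool),
      Measure.dirac (pt s) (Set.pi Set.univ t) = ∏ i, Measure.dirac (ptb (s i)) (t i) := by
    intro s
    have h1 : ∀ i : Fin n, Measure.dirac (ptb (s i)) (t i)
        = if ptb (s i) ∈ t i then 1 else 0 := by
      intro i; rw [Measure.dirac_apply' _ (ht i)]
      by_cases h : ptb (s i) ∈ t i <;> simp [h]
    rw [Measure.dirac_apply' _ (MeasurableSet.univ_pi ht)]
    simp only [h1, Finset.prod_boole]
    by_cases h : pt s ∈ Set.pi Set.univ t
    · rw [Set.indicator_of_mem h, if_pos]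
      · rfl
      · intro i _; exact (Set.mem_univ_pi.1 h) i
    · rw [Set.indicator_of_notMem h, if_neg]
      intro hc
      exact h (Set.mem_univ_pi.2 fun i => hc i (Finset.mem_univ i))
  have hfac : ∀ s : Fin n → Bool,
      ENNReal.ofReal (∏ i, q δ (s i)) = ∏ i, ENNReal.ofReal (q δ (s i)) := fun s =>
    ENNReal.ofReal_prod_of_nonneg fun i _ => q_nonneg hδ (s i)
  simp only [Measure.coe_finset_sum, Finset.sum_apply, Measure.smul_apply, smul_eq_mul, hdir,
    hfac, ← Finset.prod_mul_distrib]
  have h2 : ∀ i : Fin n, twoPointI δ (t i)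
      = ∑ b : Bool, ENNReal.ofReal (q δ b) * Measure.dirac (ptb b) (t i) := by
    intro i; rw [twoPoint_eq_sum]
    simp only [Measure.coe_finset_sum, Finset.sum_apply, Measure.smul_apply, smul_eq_mul]
  refine Eq.symm ?_
  calc ∏ i, twoPointI δ (t i)
      = ∏ i, ∑ b : Bool, ENNReal.ofReal (q δ b) * Measure.dirac (ptb b) (t i) := by
        exact Finset.prod_congr rfl fun i _ => h2 i
    _ = ∑ s ∈ Fintype.piFinset (fun _ : Fin n => (Finset.univ : Finset Bool)),
          ∏ i, ENNReal.ofReal (q δ (s i)) * Measure.dirac (ptb (s i)) (t i) :=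
        Finset.prod_univ_sum _ _
    _ = ∑ s : Fin n → Bool, ∏ i, ENNReal.ofReal (q δ (s i)) * Measure.dirac (ptb (s i)) (t i) := by
        rw [Fintype.piFinset_univ]

lemma bind_apply_eq (n : ℕ) {Y : Type} [MeasurableSpace Y] (δ : ℝ) (hδ : |δ| ≤ 1)
    (M : Kernel (Dataset n) Y) {S : Set Y} (hS : MeasurableSet S) :
    ((Measure.pi fun _ : Fin n => twoPointI δ).bind (fun x => M x)) S
      = ∑ s : Fin n → Bool, ENNReal.ofReal (∏ i, q δ (s i)) * M (pt s) S := by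
  rw [Measure.bind_apply hS M.measurable.aemeasurable, pi_twoPoint_eq n δ hδ,
    lintegral_finset_sum_measure]
  refine Finset.sum_congr rfl fun s _ => ?_
  rw [lintegral_smul_measure, lintegral_dirac' _ (M.measurable_coe hS), smul_eq_mul]

lemma bind_apply_toReal (n : ℕ) {Y : Type} [MeasurableSpace Y] (δ : ℝ) (hδ : |δ| ≤ 1)
    (M : Kernel (Dataset n) Y) [IsMarkovKernel M] {S : Set Y} (hS : MeasurableSet S) :
    (((Measure.pi fun _ : Fin n => twoPointI δ).bind (fun x => M x)) S).toReal
      = ∑ s : Fin n → Bool, (∏ i, q δ (s i)) * (M (pt s) S).toReal := by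
  rw [bind_apply_eq n δ hδ M hS, ENNReal.toReal_sum]
  · refine Finset.sum_congr rfl fun s _ => ?_
    rw [ENNReal.toReal_mul, ENNReal.toReal_ofReal (Finset.prod_nonneg fun i _ => q_nonneg hδ (s i))]
  · intro s _
    exact ENNReal.mul_ne_top ENNReal.ofReal_ne_top (measure_ne_top _ _)

lemma abs_diff_le_of_dp {a b E : ℝ} (ha0 : 0 ≤ a) (ha1 : a ≤ 1) (hb0 : 0 ≤ b) (hb1 : b ≤ 1)
    (hE : 0 ≤ E) (h1 : a ≤ Real.exp E * b) (h2 : b ≤ Real.exp E * a) :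
    |a - b| ≤ 2 * E := by
  rcases le_or_gt (1 / 2) E with h | h
  · rw [abs_le]; constructor <;> nlinarith
  · have h3 : 1 - E ≤ Real.exp (-E) := by linarith [Real.add_one_le_exp (-E)]
    have h4 : Real.exp E * (1 - E) ≤ 1 := by
      calc Real.exp E * (1 - E) ≤ Real.exp E * Real.exp (-E) :=
            mul_le_mul_of_nonneg_left h3 (Real.exp_nonneg E)
        _ = 1 := by rw [← Real.exp_add]; simp
    have he : Real.exp E ≤ 1 + 2 * E := by nlinarith [Real.exp_pos E]
    rw [abs_le]; constructor <;> nlinarith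

lemma sum_mul_le_half_l1 {ι : Type*} [Fintype ι] (u w m : ι → ℝ)
    (hm0 : ∀ s, 0 ≤ m s) (hm1 : ∀ s, m s ≤ 1)
    (huw : ∑ s, u s = ∑ s, w s) :
    |∑ s, u s * m s - ∑ s, w s * m s| ≤ (1 / 2) * ∑ s, |u s - w s| := by
  have key : ∀ (u w : ι → ℝ), ∑ s, u s = ∑ s, w s →
      ∑ s, u s * m s - ∑ s, w s * m s ≤ (1 / 2) * ∑ s, |u s - w s| := by
    intro u w huw
    have h1 : ∑ s, u s * m s - ∑ s, w s * m s = ∑ s, (u s - w s) * m s := by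
      rw [← Finset.sum_sub_distrib]; congr 1; funext s; ring
    have h2 : ∑ s, (u s - w s) * m s ≤ ∑ s, max (u s - w s) 0 := by
      refine Finset.sum_le_sum fun s _ => ?_
      rcases le_or_gt 0 (u s - w s) with hs | hs
      · calc (u s - w s) * m s ≤ (u s - w s) * 1 :=
              mul_le_mul_of_nonneg_left (hm1 s) hs
          _ = u s - w s := mul_one _
          _ ≤ max (u s - w s) 0 := le_max_left _ _
      · calc (u s - w s) * m s ≤ 0 := mul_nonpos_of_nonpos_of_nonneg hs.le (hm0 s)
          _ ≤ max (u s - w s) 0 := le_max_right _ _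
    have h3 : ∑ s, max (u s - w s) 0 = (1 / 2) * ∑ s, |u s - w s| := by
      have : ∀ s : ι, max (u s - w s) 0 = ((u s - w s) + |u s - w s|) / 2 := by
        intro s
        rcases le_or_gt 0 (u s - w s) with hs | hs
        · rw [max_eq_left hs, abs_of_nonneg hs]; ring
        · rw [max_eq_right hs.le, abs_of_neg hs]; ring
      simp only [this]
      rw [← Finset.sum_div, Finset.sum_add_distrib, Finset.sum_sub_distrib, huw]
      ring
    linarith [h1, h2, h3]
  rw [abs_sub_le_iff]
  constructor
  · exact key u w huw
  · have := key w u huw.symm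
    have habs : ∑ s, |w s - u s| = ∑ s, |u s - w s| := by
      refine Finset.sum_congr rfl fun s _ => abs_sub_comm _ _
    linarith

lemma sqrt_prod {ι : Type*} (t : Finset ι) (f : ι → ℝ) (hf : ∀ i ∈ t, 0 ≤ f i) :
    Real.sqrt (∏ i ∈ t, f i) = ∏ i ∈ t, Real.sqrt (f i) := by
  classical
  induction t using Finset.induction_on with
  | empty => simp
  | insert _ _ hx ih =>
    rename_i a t2
    rw [Finset.prod_insert hx, Finset.prod_insert hx,
      Real.sqrt_mul (hf a (Finset.mem_insert_self a t2)),
      ih fun i hi => hf i (Finset.mem_insert_of_mem hi)]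

lemma l1_le_hellinger {ι : Type*} [Fintype ι] (u w : ι → ℝ)
    (hu : ∀ s, 0 ≤ u s) (hw : ∀ s, 0 ≤ w s)
    (hu1 : ∑ s, u s = 1) (hw1 : ∑ s, w s = 1) :
    ∑ s, |u s - w s| ≤ 2 * Real.sqrt (2 * (1 - ∑ s, Real.sqrt (u s * w s))) := by
  set B := ∑ s, Real.sqrt (u s * w s) with hB
  have hsq : ∀ s : ι, Real.sqrt (u s * w s) = Real.sqrt (u s) * Real.sqrt (w s) := fun s =>
    Real.sqrt_mul (hu s) _
  have hB1 : B ≤ 1 := by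
    have hcs := Finset.sum_mul_sq_le_sq_mul_sq Finset.univ
      (fun s => Real.sqrt (u s)) (fun s => Real.sqrt (w s))
    simp only [Real.sq_sqrt (hu _), Real.sq_sqrt (hw _)] at hcs
    have hB2 : B ^ 2 ≤ 1 := by
      rw [hB]; simp only [hsq]
      calc (∑ s, Real.sqrt (u s) * Real.sqrt (w s)) ^ 2
          ≤ (∑ s, u s) * ∑ s, w s := hcs
        _ = 1 := by rw [hu1, hw1]; ring
    nlinarith [Finset.sum_nonneg (fun s (_ : s ∈ Finset.univ) =>
      Real.sqrt_nonneg (u s * w s))]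
  have habs : ∀ s : ι, |u s - w s|
      = |Real.sqrt (u s) - Real.sqrt (w s)| * (Real.sqrt (u s) + Real.sqrt (w s)) := by
    intro s
    rw [← abs_of_nonneg (add_nonneg (Real.sqrt_nonneg (u s)) (Real.sqrt_nonneg (w s))),
      ← abs_mul]
    congr 1
    have : (Real.sqrt (u s) - Real.sqrt (w s)) * (Real.sqrt (u s) + Real.sqrt (w s))
        = Real.sqrt (u s) ^ 2 - Real.sqrt (w s) ^ 2 := by ring
    rw [this, Real.sq_sqrt (hu s), Real.sq_sqrt (hw s)]
  have hcs2 := Finset.sum_mul_sq_le_sq_mul_sq Finset.univ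
    (fun s => |Real.sqrt (u s) - Real.sqrt (w s)|)
    (fun s => Real.sqrt (u s) + Real.sqrt (w s))
  have e1 : ∑ s, |Real.sqrt (u s) - Real.sqrt (w s)| ^ 2 = 2 - 2 * B := by
    have : ∀ s : ι, |Real.sqrt (u s) - Real.sqrt (w s)| ^ 2
        = u s + w s - 2 * (Real.sqrt (u s) * Real.sqrt (w s)) := by
      intro s
      rw [sq_abs]
      have : (Real.sqrt (u s) - Real.sqrt (w s)) ^ 2
          = Real.sqrt (u s) ^ 2 + Real.sqrt (w s) ^ 2
            - 2 * (Real.sqrt (u s) * Real.sqrt (w s)) := by ring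
      rw [this, Real.sq_sqrt (hu s), Real.sq_sqrt (hw s)]
    simp only [this]
    rw [Finset.sum_sub_distrib, Finset.sum_add_distrib, hu1, hw1, ← Finset.mul_sum]
    simp only [hB, hsq]
    ring
  have e2 : ∑ s, (Real.sqrt (u s) + Real.sqrt (w s)) ^ 2 = 2 + 2 * B := by
    have : ∀ s : ι, (Real.sqrt (u s) + Real.sqrt (w s)) ^ 2
        = u s + w s + 2 * (Real.sqrt (u s) * Real.sqrt (w s)) := by
      intro s
      have : (Real.sqrt (u s) + Real.sqrt (w s)) ^ 2
          = Real.sqrt (u s) ^ 2 + Real.sqrt (w s) ^ 2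
            + 2 * (Real.sqrt (u s) * Real.sqrt (w s)) := by ring
      rw [this, Real.sq_sqrt (hu s), Real.sq_sqrt (hw s)]
    simp only [this]
    rw [Finset.sum_add_distrib, Finset.sum_add_distrib, hu1, hw1, ← Finset.mul_sum]
    simp only [hB, hsq]
    ring
  have hbound : (∑ s, |u s - w s|) ^ 2 ≤ 4 * (2 * (1 - B)) := by
    calc (∑ s, |u s - w s|) ^ 2
        = (∑ s, |Real.sqrt (u s) - Real.sqrt (w s)|
            * (Real.sqrt (u s) + Real.sqrt (w s))) ^ 2 := by
          simp only [habs]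
      _ ≤ (∑ s, |Real.sqrt (u s) - Real.sqrt (w s)| ^ 2)
            * ∑ s, (Real.sqrt (u s) + Real.sqrt (w s)) ^ 2 := hcs2
      _ = (2 - 2 * B) * (2 + 2 * B) := by rw [e1, e2]
      _ ≤ 4 * (2 * (1 - B)) := by nlinarith
  have hnn : 0 ≤ ∑ s, |u s - w s| :=
    Finset.sum_nonneg fun s _ => abs_nonneg _
  have h5 := Real.sqrt_le_sqrt hbound
  rw [Real.sqrt_sq hnn] at h5
  have h6 : Real.sqrt (4 * (2 * (1 - B))) = 2 * Real.sqrt (2 * (1 - B)) := by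
    rw [Real.sqrt_mul (by norm_num : (0:ℝ) ≤ 4)]
    rw [show (4:ℝ) = 2 ^ 2 by norm_num, Real.sqrt_sq (by norm_num : (0:ℝ) ≤ 2)]
  rw [h6] at h5
  exact h5

lemma one_sub_sum_le_prod {ι : Type*} (t : Finset ι) (c : ι → ℝ)
    (h0 : ∀ i ∈ t, 0 ≤ c i) (h1 : ∀ i ∈ t, c i ≤ 1) :
    1 - ∑ i ∈ t, (1 - c i) ≤ ∏ i ∈ t, c i := by
  classical
  induction t using Finset.induction_on with
  | empty => simp
  | insert _ _ hx ih =>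
    rename_i a t2
    rw [Finset.prod_insert hx, Finset.sum_insert hx]
    have ihh := ih (fun i hi => h0 i (Finset.mem_insert_of_mem hi))
      (fun i hi => h1 i (Finset.mem_insert_of_mem hi))
    have hca0 := h0 a (Finset.mem_insert_self a t2)
    have hca1 := h1 a (Finset.mem_insert_self a t2)
    have hsnn : 0 ≤ ∑ i ∈ t2, (1 - c i) :=
      Finset.sum_nonneg fun i hi => by linarith [h1 i (Finset.mem_insert_of_mem hi)]
    nlinarith [mul_le_mul_of_nonneg_left ihh hca0]

lemma step_bound {n : ℕ} (δ : ℝ) (hδ0 : 0 ≤ δ) (hδ : δ ≤ 1 / 2)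
    (ε : Fin n → ℝ) (hε : ∀ i, 0 ≤ ε i)
    (m : (Fin n → Bool) → ℝ) (hm0 : ∀ s, 0 ≤ m s) (hm1 : ∀ s, m s ≤ 1)
    (hDP : ∀ (i : Fin n) (s : Fin n → Bool),
      m (Function.update s i true) ≤ Real.exp (ε i) * m (Function.update s i false) ∧
      m (Function.update s i false) ≤ Real.exp (ε i) * m (Function.update s i true))
    (t : ℕ) (ht : t < n) :
    |∑ s : Fin n → Bool, (∏ i : Fin n, (if (i : ℕ) < t + 1 then q (-δ) (s i) else q δ (s i))) * m s
      - ∑ s : Fin n → Bool, (∏ i : Fin n, (if (i : ℕ) < t then q (-δ) (s i) else q δ (s i))) * m s|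
      ≤ 2 * δ * ε ⟨t, ht⟩ := by
  classical
  set i₀ : Fin n := ⟨t, ht⟩ with hi₀
  have hqn : ∀ (δ' : ℝ), |δ'| ≤ 1 → ∀ b, 0 ≤ q δ' b := fun δ' h b => q_nonneg h b
  have habs1 : |δ| ≤ 1 := by rw [abs_le]; constructor <;> linarith
  have habs2 : |(-δ)| ≤ 1 := by rw [abs_neg]; exact habs1
  set rest : (Fin n → Bool) → ℝ :=
    fun s => ∏ i ∈ Finset.univ.erase i₀, (if (i : ℕ) < t then q (-δ) (s i) else q δ (s i))
    with hrest
  have hrest_nonneg : ∀ s, 0 ≤ rest s := fun s =>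
    Finset.prod_nonneg fun i _ => by
      by_cases h : (i : ℕ) < t <;> simp [h, hqn _ habs1, hqn _ habs2]
  have hne : ∀ (i : Fin n), i ≠ i₀ → ((i : ℕ) < t + 1 ↔ (i : ℕ) < t) := by
    intro i hi
    have : (i : ℕ) ≠ t := fun hc => hi (Fin.ext hc)
    omega
  have key1 : ∀ s : Fin n → Bool,
      (∏ i : Fin n, (if (i : ℕ) < t + 1 then q (-δ) (s i) else q δ (s i)))
        = q (-δ) (s i₀) * rest s := by
    intro s
    rw [← Finset.mul_prod_erase Finset.univ _ (Finset.mem_univ i₀)]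
    congr 1
    · simp [hi₀]
    · refine Finset.prod_congr rfl fun i hi => ?_
      have := hne i (Finset.mem_erase.1 hi).1
      by_cases h : (i : ℕ) < t
      · rw [if_pos (this.2 h), if_pos h]
      · rw [if_neg (fun hc => h (this.1 hc)), if_neg h]
  have key2 : ∀ s : Fin n → Bool,
      (∏ i : Fin n, (if (i : ℕ) < t then q (-δ) (s i) else q δ (s i)))
        = q δ (s i₀) * rest s := by
    intro s
    rw [← Finset.mul_prod_erase Finset.univ _ (Finset.mem_univ i₀)]
    congr 1
    simp [hi₀]
  set h : (Fin n → Bool) → ℝ := fun s => (q (-δ) (s i₀) - q δ (s i₀)) * rest s * m s with hh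
  have hdiff : ∑ s : Fin n → Bool, (∏ i : Fin n, (if (i : ℕ) < t + 1 then q (-δ) (s i) else q δ (s i))) * m s
      - ∑ s : Fin n → Bool, (∏ i : Fin n, (if (i : ℕ) < t then q (-δ) (s i) else q δ (s i))) * m s
      = ∑ s : Fin n → Bool, h s := by
    rw [← Finset.sum_sub_distrib]
    refine Finset.sum_congr rfl fun s _ => ?_
    rw [key1 s, key2 s, hh]; ring
  have hsplit : ∑ s : Fin n → Bool, h s
      = ∑ s ∈ Finset.univ.filter (fun s : Fin n → Bool => s i₀ = false), h s
        + ∑ s ∈ Finset.univ.filter (fun s : Fin n → Bool => ¬ s i₀ = false), h s :=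
    (Finset.sum_filter_add_sum_filter_not _ _ _).symm
  have hbij : ∑ s ∈ Finset.univ.filter (fun s : Fin n → Bool => ¬ s i₀ = false), h s
      = ∑ s ∈ Finset.univ.filter (fun s : Fin n → Bool => s i₀ = false),
          h (Function.update s i₀ true) := by
    refine Finset.sum_nbij' (fun s => Function.update s i₀ false)
      (fun s => Function.update s i₀ true) ?_ ?_ ?_ ?_ ?_
    · intro s hs; simp
    · intro s hs; simp
    · intro s hs
      simp only [Finset.mem_filter, Finset.mem_univ, true_and] at hs
      have hs' : s i₀ = true := by simpa using hs
      funext j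
      by_cases hj : j = i₀
      · rw [hj]; simp [hs']
      · simp [Function.update_of_ne hj]
    · intro s hs
      simp only [Finset.mem_filter, Finset.mem_univ, true_and] at hs
      funext j
      by_cases hj : j = i₀
      · rw [hj]; simp [hs]
      · simp [Function.update_of_ne hj]
    · intro s hs
      simp only [Finset.mem_filter, Finset.mem_univ, true_and] at hs
      have hs' : s i₀ = true := by simpa using hs
      have heq : Function.update (Function.update s i₀ false) i₀ true = s := by
        funext j
        by_cases hj : j = i₀
        · rw [hj]; simp [hs']
        · simp [Function.update_of_ne hj]
      rw [heq]
  have hrest_upd : ∀ s : Fin n → Bool, ∀ b, rest (Function.update s i₀ b) = rest s := by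
    intro s b
    refine Finset.prod_congr rfl fun i hi => ?_
    rw [Function.update_of_ne (Finset.mem_erase.1 hi).1]
  have hqval : ∀ b : Bool, q (-δ) b - q δ b = if b then -δ else δ := by
    intro b; cases b <;> simp [q] <;> ring
  have hmain : ∑ s : Fin n → Bool, h s
      = δ * ∑ s ∈ Finset.univ.filter (fun s : Fin n → Bool => s i₀ = false),
          rest s * (m (Function.update s i₀ false) - m (Function.update s i₀ true)) := by
    rw [hsplit, hbij, ← Finset.sum_add_distrib, Finset.mul_sum]
    refine Finset.sum_congr rfl fun s hs => ?_
    simp only [Finset.mem_filter, Finset.mem_univ, true_and] at hs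
    have hupd_false : Function.update s i₀ false = s := by
      funext j
      by_cases hj : j = i₀
      · subst hj; simp [Function.update_self, hs]
      · simp [Function.update_of_ne hj]
    simp only [hh]
    rw [hrest_upd s true, Function.update_self, hs, hqval, hqval]
    simp only [if_true, if_false]
    rw [hupd_false]
    norm_num
    ring
  have hsum_rest : ∑ s ∈ Finset.univ.filter (fun s : Fin n → Bool => s i₀ = false), rest s
      = 1 := by
    set H : Fin n → Bool → ℝ := fun i b =>
      if i = i₀ then (if b then 0 else 1) else (if (i : ℕ) < t then q (-δ) b else q δ b) with hH
    have hprod : ∀ s : Fin n → Bool, s i₀ = false → ∏ i, H i (s i) = rest s := by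
      intro s hs
      rw [← Finset.mul_prod_erase Finset.univ _ (Finset.mem_univ i₀)]
      have : H i₀ (s i₀) = 1 := by simp [hH, hs]
      rw [this, one_mul]
      refine Finset.prod_congr rfl fun i hi => ?_
      simp [hH, (Finset.mem_erase.1 hi).1]
    have hzero : ∀ s : Fin n → Bool, ¬ s i₀ = false → ∏ i, H i (s i) = 0 := by
      intro s hs
      refine Finset.prod_eq_zero (Finset.mem_univ i₀) ?_
      have hs' : s i₀ = true := by simpa using hs
      simp [hH, hs']
    have htot : ∑ s : Fin n → Bool, ∏ i, H i (s i) = 1 := by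
      have := Finset.prod_univ_sum (fun _ : Fin n => (Finset.univ : Finset Bool))
        (fun i b => H i b)
      rw [Fintype.piFinset_univ] at this
      rw [← this]
      have : ∀ i : Fin n, ∑ b : Bool, H i b = 1 := by
        intro i
        rw [Fintype.sum_bool]
        by_cases hi : i = i₀
        · simp [hH, hi]
        · simp only [hH, if_neg hi]
          by_cases h2 : (i : ℕ) < t
          · simp only [if_pos h2]; have := q_sum (-δ); linarith
          · simp only [if_neg h2]; have := q_sum δ; linarith
      rw [Finset.prod_congr rfl fun i _ => this i, Finset.prod_const_one]
    have hsplit2 := Finset.sum_filter_add_sum_filter_not Finset.univ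
      (fun s : Fin n → Bool => s i₀ = false) (fun s => ∏ i, H i (s i))
    rw [Finset.sum_congr rfl (fun s hs => hprod s (Finset.mem_filter.1 hs).2),
      Finset.sum_congr rfl (fun s hs => hzero s (Finset.mem_filter.1 hs).2),
      Finset.sum_const_zero, add_zero] at hsplit2
    exact hsplit2.trans htot
  rw [hdiff, hmain, abs_mul, abs_of_nonneg hδ0]
  calc δ * |∑ s ∈ Finset.univ.filter (fun s : Fin n → Bool => s i₀ = false),
        rest s * (m (Function.update s i₀ false) - m (Function.update s i₀ true))|
      ≤ δ * ∑ s ∈ Finset.univ.filter (fun s : Fin n → Bool => s i₀ = false),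
          rest s * (2 * ε i₀) := by
        refine mul_le_mul_of_nonneg_left ?_ hδ0
        refine (Finset.abs_sum_le_sum_abs _ _).trans ?_
        refine Finset.sum_le_sum fun s _ => ?_
        rw [abs_mul, abs_of_nonneg (hrest_nonneg s)]
        refine mul_le_mul_of_nonneg_left ?_ (hrest_nonneg s)
        rw [abs_sub_comm]
        exact abs_diff_le_of_dp (hm0 _) (hm1 _) (hm0 _) (hm1 _) (hε i₀)
          (hDP i₀ s).1 (hDP i₀ s).2
    _ = 2 * δ * ε i₀ := by
        rw [← Finset.sum_mul, hsum_rest]; ring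
  
lemma sum_prod {n : ℕ} (G : Fin n → Bool → ℝ) :
    ∑ s : Fin n → Bool, ∏ i, G i (s i) = ∏ i, (G i true + G i false) := by
  have h := Finset.prod_univ_sum (fun _ : Fin n => (Finset.univ : Finset Bool)) (fun i b => G i b)
  rw [Fintype.piFinset_univ] at h
  rw [← h]
  exact Finset.prod_congr rfl fun i _ => by rw [Fintype.sum_bool]

set_option maxHeartbeats 1000000 in
lemma core (n k : ℕ) (hk : k ≤ n) (δ : ℝ) (hδ0 : 0 ≤ δ) (hδ : δ ≤ 1 / 2)
    (ε : Fin n → ℝ) (hε : ∀ i, 0 ≤ ε i)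
    (m : (Fin n → Bool) → ℝ) (hm0 : ∀ s, 0 ≤ m s) (hm1 : ∀ s, m s ≤ 1)
    (hDP : ∀ (i : Fin n) (s : Fin n → Bool),
      m (Function.update s i true) ≤ Real.exp (ε i) * m (Function.update s i false) ∧
      m (Function.update s i false) ≤ Real.exp (ε i) * m (Function.update s i true)) :
    |∑ s : Fin n → Bool, (∏ i : Fin n, q δ (s i)) * m s
      - ∑ s : Fin n → Bool, (∏ i : Fin n, q (-δ) (s i)) * m s|
      ≤ 2 * δ * (∑ i : Fin n, if (i : ℕ) < k then ε i else 0)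
        + δ * Real.sqrt (3 * ((n : ℝ) - k) / 2) := by
  classical
  have habs1 : |δ| ≤ 1 := by rw [abs_le]; constructor <;> linarith
  have habs2 : |(-δ)| ≤ 1 := by rw [abs_neg]; exact habs1
  set f : ℕ → ℝ := fun t => ∑ s : Fin n → Bool,
    (∏ i : Fin n, (if (i : ℕ) < t then q (-δ) (s i) else q δ (s i))) * m s with hf
  have hf0 : f 0 = ∑ s : Fin n → Bool, (∏ i : Fin n, q δ (s i)) * m s := by
    simp [hf]
  have hfn : f n = ∑ s : Fin n → Bool, (∏ i : Fin n, q (-δ) (s i)) * m s := by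
    simp only [hf]
    refine Finset.sum_congr rfl fun s _ => ?_
    congr 1
    exact Finset.prod_congr rfl fun i _ => if_pos i.isLt
  set E : ℕ → ℝ := fun t => if h : t < n then ε ⟨t, h⟩ else 0 with hE
  -- telescoping part
  have hstep : |f 0 - f k| ≤ 2 * δ * (∑ i : Fin n, if (i : ℕ) < k then ε i else 0) := by
    have htel : ∑ t ∈ Finset.range k, (f (t + 1) - f t) = f k - f 0 :=
      Finset.sum_range_sub f k
    have h1 : |f 0 - f k| ≤ ∑ t ∈ Finset.range k, |f (t + 1) - f t| := by
      rw [abs_sub_comm, ← htel]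
      exact Finset.abs_sum_le_sum_abs _ _
    have h2 : ∀ t ∈ Finset.range k, |f (t + 1) - f t| ≤ 2 * δ * E t := by
      intro t htk
      have htn : t < n := lt_of_lt_of_le (Finset.mem_range.1 htk) hk
      have := step_bound δ hδ0 hδ ε hε m hm0 hm1 hDP t htn
      simp only [hE, dif_pos htn]
      exact this
    have h3 : ∑ i : Fin n, (if (i : ℕ) < k then ε i else 0)
        = ∑ t ∈ Finset.range k, E t := by
      have h4 : ∑ i : Fin n, (if (i : ℕ) < k then ε i else 0)
          = ∑ i : Fin n, (fun t : ℕ => if t < k then E t else 0) (i : ℕ) := by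
        refine Finset.sum_congr rfl fun i _ => ?_
        by_cases hik : (i : ℕ) < k
        · simp only [if_pos hik, hE, dif_pos i.isLt]
        · simp [hik]
      rw [h4, Fin.sum_univ_eq_sum_range (fun t : ℕ => if t < k then E t else 0) n]
      rw [← Finset.sum_filter]
      congr 1
      ext a
      simp only [Finset.mem_filter, Finset.mem_range]
      omega
    calc |f 0 - f k| ≤ ∑ t ∈ Finset.range k, |f (t + 1) - f t| := h1
      _ ≤ ∑ t ∈ Finset.range k, 2 * δ * E t := Finset.sum_le_sum h2
      _ = 2 * δ * ∑ t ∈ Finset.range k, E t := by rw [← Finset.mul_sum]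
      _ = 2 * δ * (∑ i : Fin n, if (i : ℕ) < k then ε i else 0) := by rw [h3]
  -- Hellinger part
  have hhell : |f k - f n| ≤ δ * Real.sqrt (3 * ((n : ℝ) - k) / 2) := by
    set u : (Fin n → Bool) → ℝ :=
      fun s => ∏ i : Fin n, (if (i : ℕ) < k then q (-δ) (s i) else q δ (s i)) with hu
    set w : (Fin n → Bool) → ℝ := fun s => ∏ i : Fin n, q (-δ) (s i) with hw
    have hqn1 : ∀ b, 0 ≤ q δ b := q_nonneg habs1
    have hqn2 : ∀ b, 0 ≤ q (-δ) b := q_nonneg habs2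
    have hun : ∀ s, 0 ≤ u s := fun s => Finset.prod_nonneg fun i _ => by
      by_cases h : (i : ℕ) < k <;> simp [h, hqn1, hqn2]
    have hwn : ∀ s, 0 ≤ w s := fun s => Finset.prod_nonneg fun i _ => hqn2 _
    have hu1 : ∑ s, u s = 1 := by
      rw [hu, sum_prod (fun i b => if (i : ℕ) < k then q (-δ) b else q δ b)]
      refine Finset.prod_eq_one fun i _ => ?_
      by_cases h : (i : ℕ) < k
      · simp only [if_pos h]; have := q_sum (-δ); linarith
      · simp only [if_neg h]; have := q_sum δ; linarith
    have hw1 : ∑ s, w s = 1 := by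
      rw [hw, sum_prod (fun i b => q (-δ) b)]
      refine Finset.prod_eq_one fun i _ => ?_
      have := q_sum (-δ); linarith
    set ρ : ℝ := Real.sqrt (1 - δ ^ 2) with hρ
    have hρ0 : 0 ≤ ρ := Real.sqrt_nonneg _
    have hρ2 : ρ ^ 2 = 1 - δ ^ 2 := Real.sq_sqrt (by nlinarith)
    have hρ1 : ρ ≤ 1 := by nlinarith
    have hρ13 : 1 / 3 ≤ ρ := by nlinarith
    have hone_sub : 1 - ρ ≤ 3 / 4 * δ ^ 2 := by nlinarith
    -- compute the Bhattacharyya coefficient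
    have hBval : ∑ s : Fin n → Bool, Real.sqrt (u s * w s)
        = ∏ i : Fin n, (if (i : ℕ) < k then (1 : ℝ) else ρ) := by
      have h1 : ∀ s : Fin n → Bool, Real.sqrt (u s * w s)
          = ∏ i : Fin n, Real.sqrt ((if (i : ℕ) < k then q (-δ) (s i) else q δ (s i))
              * q (-δ) (s i)) := by
        intro s
        rw [hu, hw, ← Finset.prod_mul_distrib]
        exact sqrt_prod _ _ fun i _ => by
          by_cases h : (i : ℕ) < k <;>
            simp [h, mul_nonneg (hqn1 _) (hqn2 _), mul_nonneg (hqn2 _) (hqn2 _)]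
      simp only [h1]
      rw [sum_prod (fun i b => Real.sqrt ((if (i : ℕ) < k then q (-δ) b else q δ b) * q (-δ) b))]
      refine Finset.prod_congr rfl fun i _ => ?_
      by_cases h : (i : ℕ) < k
      · simp only [if_pos h]
        rw [Real.sqrt_mul_self (hqn2 true), Real.sqrt_mul_self (hqn2 false)]
        have := q_sum (-δ); linarith
      · simp only [if_neg h]
        have e1 : q δ true * q (-δ) true = (1 - δ ^ 2) / 4 := by simp [q]; ring
        have e2 : q δ false * q (-δ) false = (1 - δ ^ 2) / 4 := by simp [q]; ring
        rw [e1, e2]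
        have e3 : Real.sqrt ((1 - δ ^ 2) / 4) = ρ / 2 := by
          rw [show (1 - δ ^ 2) / 4 = (1 - δ ^ 2) * (1 / 2) ^ 2 by ring,
            Real.sqrt_mul (by nlinarith), Real.sqrt_sq (by norm_num : (0:ℝ) ≤ 1 / 2)]
          rw [hρ]; ring
        rw [e3]; ring
    have hprod_ge : 1 - ((n : ℝ) - k) * (1 - ρ)
        ≤ ∏ i : Fin n, (if (i : ℕ) < k then (1 : ℝ) else ρ) := by
      have := one_sub_sum_le_prod Finset.univ
        (fun i : Fin n => if (i : ℕ) < k then (1 : ℝ) else ρ)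
        (fun i _ => by by_cases h : (i : ℕ) < k <;> simp [h, hρ0])
        (fun i _ => by by_cases h : (i : ℕ) < k <;> simp [h, hρ1])
      have hsum : ∑ i : Fin n, (1 - (if (i : ℕ) < k then (1 : ℝ) else ρ))
          = ((n : ℝ) - k) * (1 - ρ) := by
        have h5 : ∀ i : Fin n, (1 - (if (i : ℕ) < k then (1 : ℝ) else ρ))
            = (fun t : ℕ => if t < k then (0 : ℝ) else 1 - ρ) (i : ℕ) := by
          intro i; by_cases h : (i : ℕ) < k <;> simp [h]
        rw [Finset.sum_congr rfl fun i _ => h5 i,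
          Fin.sum_univ_eq_sum_range (fun t : ℕ => if t < k then (0 : ℝ) else 1 - ρ) n,
          Finset.sum_ite, Finset.sum_const, Finset.sum_const]
        have h6 : (Finset.range n).filter (fun t => ¬ t < k) = Finset.Ico k n := by
          ext a; simp only [Finset.mem_filter, Finset.mem_range, Finset.mem_Ico]; omega
        rw [h6, Nat.card_Ico, smul_zero, zero_add, nsmul_eq_mul]
        rw [Nat.cast_sub hk]
      linarith [this, hsum.symm ▸ this]
    have hB1 : 1 - (∑ s : Fin n → Bool, Real.sqrt (u s * w s)) ≤ ((n : ℝ) - k) * (1 - ρ) := by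
      rw [hBval]; linarith
    have hl1 := l1_le_hellinger u w hun hwn hu1 hw1
    have hhalf := sum_mul_le_half_l1 u w m hm0 hm1 (hu1.trans hw1.symm)
    have h1 : f k = ∑ s, u s * m s := rfl
    have h2 : f n = ∑ s, w s * m s := hfn.trans rfl
    rw [h1, h2]
    have hchain : |∑ s, u s * m s - ∑ s, w s * m s|
        ≤ Real.sqrt (2 * (1 - ∑ s : Fin n → Bool, Real.sqrt (u s * w s))) := by
      calc |∑ s, u s * m s - ∑ s, w s * m s|
          ≤ (1 / 2) * ∑ s, |u s - w s| := hhalf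
        _ ≤ (1 / 2) * (2 * Real.sqrt (2 * (1 - ∑ s : Fin n → Bool, Real.sqrt (u s * w s)))) := by
            linarith
        _ = Real.sqrt (2 * (1 - ∑ s : Fin n → Bool, Real.sqrt (u s * w s))) := by ring
    refine hchain.trans ?_
    have hnk : (0 : ℝ) ≤ (n : ℝ) - k := by
      have : (k : ℝ) ≤ n := Nat.cast_le.2 hk
      linarith
    have harg : 2 * (1 - ∑ s : Fin n → Bool, Real.sqrt (u s * w s))
        ≤ δ ^ 2 * (3 * ((n : ℝ) - k) / 2) := by
      have : 2 * (1 - ∑ s : Fin n → Bool, Real.sqrt (u s * w s))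
          ≤ 2 * (((n : ℝ) - k) * (1 - ρ)) := by linarith
      refine this.trans ?_
      have := mul_le_mul_of_nonneg_left hone_sub hnk
      nlinarith
    calc Real.sqrt (2 * (1 - ∑ s : Fin n → Bool, Real.sqrt (u s * w s)))
        ≤ Real.sqrt (δ ^ 2 * (3 * ((n : ℝ) - k) / 2)) := Real.sqrt_le_sqrt harg
      _ = δ * Real.sqrt (3 * ((n : ℝ) - k) / 2) := by
          rw [Real.sqrt_mul (sq_nonneg δ), Real.sqrt_sq hδ0]
  calc |∑ s : Fin n → Bool, (∏ i : Fin n, q δ (s i)) * m s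
      - ∑ s : Fin n → Bool, (∏ i : Fin n, q (-δ) (s i)) * m s|
      = |f 0 - f n| := by rw [hf0, hfn]
    _ ≤ |f 0 - f k| + |f k - f n| := abs_sub_le _ _ _
    _ ≤ 2 * δ * (∑ i : Fin n, if (i : ℕ) < k then ε i else 0)
        + δ * Real.sqrt (3 * ((n : ℝ) - k) / 2) := add_le_add hstep hhell

end TPB

set_option maxHeartbeats 1000000 in
theorem twoPoint_output_tv_bound
    (n : ℕ) {Y : Type} [MeasurableSpace Y]
    (δ : ℝ) (hδ0 : 0 ≤ δ) (hδ : δ ≤ 1 / 2)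
    (ε : Fin n → ℝ) (hε : ∀ i, 0 ≤ ε i)
    (M : Kernel (Dataset n) Y) (hM : IsMarkovKernel M) (hDP : IsDP ε M)
    (k : ℕ) (hk : k ≤ n) :
    tvDist ((Measure.pi fun _ : Fin n => twoPointI δ).bind (fun x => M x))
        ((Measure.pi fun _ : Fin n => twoPointI (-δ)).bind (fun x => M x))
      ≤ 2 * δ * (∑ i : Fin n, if (i : ℕ) < k then ε i else 0)
        + δ * Real.sqrt (3 * ((n : ℝ) - k) / 2) := by
  classical
  haveI := hM
  have habs1 : |δ| ≤ 1 := by rw [abs_le]; constructor <;> linarith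
  have habs2 : |(-δ)| ≤ 1 := by rw [abs_neg]; exact habs1
  rw [tvDist]
  refine ciSup_le ?_
  rintro ⟨S, hS⟩
  rw [TPB.bind_apply_toReal n δ habs1 M hS, TPB.bind_apply_toReal n (-δ) habs2 M hS]
  set mf : (Fin n → Bool) → ℝ := fun s => (M (TPB.pt s) S).toReal with hmf
  have hm0 : ∀ s, 0 ≤ mf s := fun s => ENNReal.toReal_nonneg
  have hm1 : ∀ s, mf s ≤ 1 := by
    intro s
    have h : M (TPB.pt s) S ≤ 1 := prob_le_one
    calc mf s ≤ (1 : ENNReal).toReal := ENNReal.toReal_mono (by simp) h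
      _ = 1 := by simp
  have hDP2 : ∀ (i : Fin n) (s : Fin n → Bool),
      mf (Function.update s i true) ≤ Real.exp (ε i) * mf (Function.update s i false) ∧
      mf (Function.update s i false) ≤ Real.exp (ε i) * mf (Function.update s i true) := by
    intro i s
    have hnb : ∀ b b' : Bool, INeighbor i (TPB.pt (Function.update s i b))
        (TPB.pt (Function.update s i b')) := by
      intro b b' j hj
      simp [TPB.pt, Function.update_of_ne hj]
    have key : ∀ b b' : Bool, mf (Function.update s i b)
        ≤ Real.exp (ε i) * mf (Function.update s i b') := by
      intro b b'
      have h := hDP i _ _ (hnb b b') S hS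
      have hfin : ENNReal.ofReal (Real.exp (ε i)) * M (TPB.pt (Function.update s i b')) S ≠ ⊤ :=
        ENNReal.mul_ne_top ENNReal.ofReal_ne_top (measure_ne_top _ _)
      have h2 := ENNReal.toReal_mono hfin h
      rwa [ENNReal.toReal_mul, ENNReal.toReal_ofReal (Real.exp_nonneg _)] at h2
    exact ⟨key true false, key false true⟩
  exact TPB.core n k hk δ hδ0 hδ ε hε mf hm0 hm1 hDP2
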